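/- arXiv:1808.06199 — 3 statements merged into one kernel-verified Lean document; each statement's English description precedes it below -/
import Mathlib

section
/- Let A be a real symmetric n×n matrix and let X_A = {x ∈ ℝⁿ : x xᵀ − A is positive semidefinite}. Then X_A is nonempty if and only if the second-largest eigenvalue of A satisfies λ₂(A) ≤ 0. -/
open Matrix

/-- For a real symmetric n×n matrix A (n ≥ 2), the set
X_A = {x : x xᵀ − A ⪰ 0} is nonempty iff λ₂(A) ≤ 0, where the eigenvalues
are given in descending order by `lam` with orthonormal eigenvectors `u`. -/
theorem XA_nonempty_iff_lambda2_nonpos {n : ℕ} (hn : 2 ≤ n)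
    (A : Matrix (Fin n) (Fin n) ℝ) (hA : A.IsSymm)
    (lam : Fin n → ℝ) (u : Fin n → (Fin n → ℝ))
    (horth : ∀ i j, u i ⬝ᵥ u j = if i = j then (1 : ℝ) else 0)
    (heig : ∀ i, A.mulVec (u i) = lam i • u i)
    (hsort : ∀ i j : Fin n, i ≤ j → lam j ≤ lam i) :
    (∃ x : Fin n → ℝ, (vecMulVec x x - A).PosSemidef) ↔ lam ⟨1, hn⟩ ≤ 0 := by
  set i0 : Fin n := ⟨0, by omega⟩ with hi0
  set i1 : Fin n := ⟨1, hn⟩ with hi1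
  have hne : i0 ≠ i1 := by simp [hi0, hi1, Fin.ext_iff]
  constructor
  · rintro ⟨x, hx⟩
    by_contra hpos
    push_neg at hpos
    have hl0 : 0 < lam i0 := lt_of_lt_of_le hpos (hsort i0 i1 (by simp [hi0, hi1, Fin.le_def]))
    have key : ∀ z : Fin n → ℝ, 0 ≤ (x ⬝ᵥ z)^2 - z ⬝ᵥ A.mulVec z := by
      intro z
      have h2 := hx.dotProduct_mulVec_nonneg z
      have hmv : (vecMulVec x x) *ᵥ z = (x ⬝ᵥ z) • x := by
        ext i
        simp only [mulVec, vecMulVec_apply, dotProduct, Pi.smul_apply, smul_eq_mul,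
          Finset.sum_mul]
        exact Finset.sum_congr rfl fun j _ => by ring
      have heq : star z ⬝ᵥ (vecMulVec x x - A) *ᵥ z = (x ⬝ᵥ z)^2 - z ⬝ᵥ A.mulVec z := by
        rw [star_trivial, sub_mulVec, dotProduct_sub, hmv, dotProduct_smul, smul_eq_mul,
          dotProduct_comm z x]
        ring
      rw [heq] at h2
      exact h2
    set b := x ⬝ᵥ u i1 with hb
    by_cases hbz : b = 0
    · have hk := key (u i1)
      have hQ : u i1 ⬝ᵥ A.mulVec (u i1) = lam i1 := by
        rw [heig]; simp [dotProduct_smul, horth]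
      rw [hQ, ← hb, hbz] at hk
      nlinarith
    · set a := x ⬝ᵥ u i0 with ha
      set z : Fin n → ℝ := b • u i0 - a • u i1 with hz
      have hxz : x ⬝ᵥ z = 0 := by
        simp [hz, dotProduct_sub, dotProduct_smul, ← ha, ← hb]; ring
      have hAz : z ⬝ᵥ A.mulVec z = lam i0 * b^2 + lam i1 * a^2 := by
        simp only [hz, mulVec_sub, mulVec_smul, heig]
        simp [dotProduct_sub, sub_dotProduct, dotProduct_smul, smul_dotProduct, horth, hne,
          hne.symm]
        ring
      have hk := key z
      rw [hxz, hAz] at hk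
      have hb2 : 0 < b^2 := lt_of_le_of_ne (sq_nonneg b) (by simpa using (pow_ne_zero 2 hbz).symm)
      nlinarith [sq_nonneg a]
  · intro hl2
    have hlneg : ∀ i : Fin n, i ≠ i0 → lam i ≤ 0 := by
      intro i hi
      have hiv : (i : ℕ) ≠ 0 := fun h => hi (Fin.ext (by simp [hi0, h]))
      exact le_trans (hsort i1 i (by simp [hi1, Fin.le_def]; omega)) hl2
    set U : Matrix (Fin n) (Fin n) ℝ := Matrix.of u with hU
    have hUUt : U * Uᵀ = 1 := by
      ext i j
      simpa [hU, mul_apply, one_apply, dotProduct] using horth i j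
    have hUtU : Uᵀ * U = 1 := mul_eq_one_comm.mp hUUt
    have hAUt : A * Uᵀ = Uᵀ * diagonal lam := by
      ext k i
      rw [mul_diagonal]
      have h := congrFun (heig i) k
      simp only [mulVec, dotProduct, Pi.smul_apply, smul_eq_mul] at h
      simp only [mul_apply, transpose_apply, hU, of_apply]
      rw [h]; ring
    have hAeq : A = Uᵀ * diagonal lam * U := by
      calc A = A * (Uᵀ * U) := by rw [hUtU, Matrix.mul_one]
      _ = (A * Uᵀ) * U := by rw [Matrix.mul_assoc]
      _ = Uᵀ * diagonal lam * U := by rw [hAUt]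
    set s : ℝ := Real.sqrt (max (lam i0) 0) with hs
    have hs2 : s^2 = max (lam i0) 0 := Real.sq_sqrt (le_max_right _ _)
    refine ⟨s • u i0, ?_⟩
    set e : Fin n → ℝ := fun i => if i = i0 then s^2 else 0 with he
    have hvv : vecMulVec (s • u i0) (s • u i0) = Uᵀ * diagonal e * U := by
      ext k l
      rw [Matrix.mul_assoc, mul_apply]
      simp only [vecMulVec_apply, Pi.smul_apply, smul_eq_mul, transpose_apply, hU, of_apply,
        diagonal_mul, he]
      rw [Finset.sum_eq_single i0]
      · rw [if_pos rfl]; ring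
      · intro j _ hj; rw [if_neg hj]; ring
      · intro hmem; exact absurd (Finset.mem_univ i0) hmem
    have heqm : vecMulVec (s • u i0) (s • u i0) - A =
        Uᵀ * diagonal (fun i => e i - lam i) * U := by
      rw [hvv]
      conv_lhs => rw [hAeq]
      rw [← Matrix.sub_mul, ← Matrix.mul_sub, ← diagonal_sub]
    rw [heqm]
    have hdpos : 0 ≤ (fun i => e i - lam i) := by
      intro i
      show 0 ≤ e i - lam i
      by_cases hi : i = i0
      · have h1 : e i = s ^ 2 := by rw [he]; exact if_pos hi
        have h2 := le_max_left (lam i0) 0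
        rw [h1, hs2, hi]; linarith
      · have h1 : e i = 0 := by rw [he]; exact if_neg hi
        have := hlneg i hi
        rw [h1]; linarith
    have hdiag := Matrix.PosSemidef.diagonal hdpos
    simpa using hdiag.conjTranspose_mul_mul_same U
end

section
/- Let A be a real symmetric n×n matrix with λ₁(A) > 0 and λₖ(A) < 0 for all k ≥ 2, having orthonormal eigenvectors u⁽¹⁾,...,u⁽ⁿ⁾ with eigenvalues λ₁(A),...,λₙ(A). Then a vector x ∈ ℝⁿ satisfies x xᵀ − A ⪰ 0 if and only if Σᵢ (xᵀ u⁽ⁱ⁾)² / λᵢ(A) ≥ 1. -/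
open Matrix

set_option maxHeartbeats 800000 in
/-- If λ₁(A) > 0 and λᵢ(A) < 0 for i ≥ 2 (eigenvalues `lam` in
descending order, orthonormal eigenbasis `u`), then x xᵀ − A ⪰ 0 iff
Σᵢ (xᵀu⁽ⁱ⁾)²/λᵢ(A) ≥ 1. -/
theorem XA_hyperboloid_characterization {n : ℕ} (hn : 2 ≤ n)
    (A : Matrix (Fin n) (Fin n) ℝ) (hA : A.IsSymm)
    (lam : Fin n → ℝ) (u : Fin n → (Fin n → ℝ))
    (horth : ∀ i j, u i ⬝ᵥ u j = if i = j then (1 : ℝ) else 0)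
    (heig : ∀ i, A.mulVec (u i) = lam i • u i)
    (hsort : ∀ i j : Fin n, i ≤ j → lam j ≤ lam i)
    (hl1 : 0 < lam ⟨0, by omega⟩)
    (hneg : ∀ i : Fin n, (⟨1, hn⟩ : Fin n) ≤ i → lam i < 0) :
    ∀ x : Fin n → ℝ,
      (vecMulVec x x - A).PosSemidef ↔ 1 ≤ ∑ i, (x ⬝ᵥ u i) ^ 2 / lam i := by
  intro x
  set i0 : Fin n := ⟨0, by omega⟩ with hi0def
  set U : Matrix (Fin n) (Fin n) ℝ := Matrix.of u with hUdef
  set c : Fin n → ℝ := fun i => x ⬝ᵥ u i with hcdef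
  have hl1' : 0 < lam i0 := hl1
  have hnegne : ∀ i : Fin n, i ≠ i0 → lam i < 0 := by
    intro i hi
    refine hneg i ?_
    have : (i : ℕ) ≠ 0 := fun h => hi (Fin.ext h)
    exact Fin.mk_le_of_le_val (by omega)
  have hlne : ∀ i : Fin n, lam i ≠ 0 := by
    intro i
    by_cases h : i = i0
    · rw [h]; exact ne_of_gt hl1'
    · exact ne_of_lt (hnegne i h)
  have hUUT : U * Uᵀ = 1 := by
    ext i j
    simpa [Matrix.mul_apply, Matrix.one_apply, dotProduct, hUdef] using horth i j
  have hUTU : Uᵀ * U = 1 := mul_eq_one_comm.mp hUUT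
  have hsurj : ∀ e : Fin n → ℝ, U *ᵥ (Uᵀ *ᵥ e) = e := by
    intro e
    rw [Matrix.mulVec_mulVec, hUUT, Matrix.one_mulVec]
  have hAU : A * Uᵀ = Uᵀ * Matrix.diagonal lam := by
    ext k j
    have h := congrFun (heig j) k
    simp only [Matrix.mulVec, dotProduct, Pi.smul_apply, smul_eq_mul] at h
    rw [Matrix.mul_diagonal]
    simpa [Matrix.mul_apply, Matrix.transpose_apply, hUdef, mul_comm] using h
  have hAeq : A = Uᵀ * Matrix.diagonal lam * U := by
    calc A = A * (Uᵀ * U) := by rw [hUTU, Matrix.mul_one]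
    _ = (A * Uᵀ) * U := by rw [Matrix.mul_assoc]
    _ = Uᵀ * Matrix.diagonal lam * U := by rw [hAU]
  have hAform : ∀ y : Fin n → ℝ, y ⬝ᵥ (A *ᵥ y) = ∑ i, lam i * (U *ᵥ y) i ^ 2 := by
    intro y
    conv_lhs => rw [hAeq]
    rw [← Matrix.mulVec_mulVec, ← Matrix.mulVec_mulVec, Matrix.dotProduct_mulVec,
      Matrix.vecMul_transpose]
    simp only [dotProduct, Matrix.mulVec_diagonal]
    exact Finset.sum_congr rfl fun i _ => by ring
  have hxxform : ∀ y : Fin n → ℝ, y ⬝ᵥ (vecMulVec x x *ᵥ y) = (x ⬝ᵥ y) ^ 2 := by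
    intro y
    have h2 : (x ⬝ᵥ y) ^ 2 = ∑ k, ∑ m, (x k * y k) * (x m * y m) := by
      rw [sq, dotProduct, Finset.sum_mul_sum]
    rw [h2]
    simp only [dotProduct, Matrix.mulVec, Matrix.vecMulVec_apply, dotProduct, Finset.mul_sum]
    exact Finset.sum_congr rfl fun k _ => Finset.sum_congr rfl fun m _ => by ring
  have hxy : ∀ y : Fin n → ℝ, x ⬝ᵥ y = ∑ i, c i * (U *ᵥ y) i := by
    intro y
    have h1 : x ⬝ᵥ y = x ⬝ᵥ ((Uᵀ * U) *ᵥ y) := by rw [hUTU, Matrix.one_mulVec]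
    rw [h1, ← Matrix.mulVec_mulVec, Matrix.dotProduct_mulVec, Matrix.vecMul_transpose]
    refine Finset.sum_congr rfl fun i _ => ?_
    congr 1
    simp [Matrix.mulVec, dotProduct, hUdef, hcdef, mul_comm]
  have hform : ∀ y : Fin n → ℝ,
      y ⬝ᵥ ((vecMulVec x x - A) *ᵥ y)
        = (∑ i, c i * (U *ᵥ y) i) ^ 2 - ∑ i, lam i * (U *ᵥ y) i ^ 2 := by
    intro y
    rw [Matrix.sub_mulVec, dotProduct_sub, hxxform, hAform, hxy]
  -- PSD iff scalar inequality
  have hPSDiff : (vecMulVec x x - A).PosSemidef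
      ↔ ∀ e : Fin n → ℝ, ∑ i, lam i * e i ^ 2 ≤ (∑ i, c i * e i) ^ 2 := by
    constructor
    · intro hpsd e
      have h := hpsd.dotProduct_mulVec_nonneg (Uᵀ *ᵥ e)
      rw [star_trivial, hform, hsurj] at h
      linarith
    · intro h
      refine Matrix.PosSemidef.of_dotProduct_mulVec_nonneg ?_ ?_
      · refine Matrix.IsHermitian.sub ?_ ?_
        · ext i j
          simp [Matrix.conjTranspose_apply, Matrix.vecMulVec_apply, mul_comm]
        · ext i j
          simpa [Matrix.conjTranspose_apply] using (congrFun (congrFun hA j) i).symm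
      · intro y
        rw [star_trivial, hform]
        have := h (U *ᵥ y)
        linarith
  rw [hPSDiff]
  -- scalar equivalence
  have hsplit : ∀ f : Fin n → ℝ,
      ∑ i, f i = f i0 + ∑ i ∈ Finset.univ.erase i0, f i :=
    fun f => (Finset.add_sum_erase _ f (Finset.mem_univ i0)).symm
  set R : ℝ := ∑ i ∈ Finset.univ.erase i0, c i ^ 2 / lam i with hRdef
  have hR : R ≤ 0 := by
    refine Finset.sum_nonpos fun i hi => ?_
    exact div_nonpos_of_nonneg_of_nonpos (sq_nonneg _)
      (le_of_lt (hnegne i (Finset.ne_of_mem_erase hi)))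
  have hSsplit : ∑ i, c i ^ 2 / lam i = c i0 ^ 2 / lam i0 + R := hsplit _
  constructor
  · intro h
    -- get lam i0 ≤ c i0 ^ 2
    have h1 := h (Pi.single i0 1)
    have hc0 : lam i0 ≤ c i0 ^ 2 := by
      simpa [Pi.single_apply, mul_ite, ite_pow, Finset.sum_ite_eq'] using h1
    have hcne : c i0 ≠ 0 := by
      intro hc
      rw [hc] at hc0
      simp at hc0
      linarith
    set e : Fin n → ℝ := fun i => if i = i0 then (1 - R) / c i0 else c i / lam i with hedef
    have he1 : ∑ i, c i * e i = 1 := by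
      rw [hsplit (fun i => c i * e i)]
      have hrest : ∑ i ∈ Finset.univ.erase i0, c i * e i = R := by
        refine Finset.sum_congr rfl fun i hi => ?_
        have hine := Finset.ne_of_mem_erase hi
        simp only [hedef, if_neg hine]
        ring
      rw [hrest]
      simp only [hedef, if_pos rfl]
      rw [mul_comm, div_mul_cancel₀ _ hcne]
      ring
    have he2 : ∑ i, lam i * e i ^ 2 = lam i0 * ((1 - R) / c i0) ^ 2 + R := by
      rw [hsplit (fun i => lam i * e i ^ 2)]
      have hrest : ∑ i ∈ Finset.univ.erase i0, lam i * e i ^ 2 = R := by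
        refine Finset.sum_congr rfl fun i hi => ?_
        have hine := Finset.ne_of_mem_erase hi
        have hli := hlne i
        simp only [hedef, if_neg hine]
        field_simp
      rw [hrest]
      simp [hedef]
    have hkey := h e
    rw [he1, he2] at hkey
    rw [hSsplit]
    have hc2 : 0 < c i0 ^ 2 := by positivity
    have hexp : lam i0 * ((1 - R) / c i0) ^ 2 = lam i0 * (1 - R) ^ 2 / c i0 ^ 2 := by ring
    rw [hexp] at hkey
    have hkey2 : lam i0 * (1 - R) ^ 2 / c i0 ^ 2 ≤ 1 - R := by linarith
    rw [div_le_iff₀ hc2] at hkey2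
    have hstep : lam i0 * (1 - R) ≤ c i0 ^ 2 := by nlinarith [hkey2, hR]
    have hfin : 1 - R ≤ c i0 ^ 2 / lam i0 := by
      rw [le_div_iff₀ hl1']
      nlinarith [hstep]
    linarith
  · intro hS e
    set P : ℝ := ∑ i ∈ Finset.univ.erase i0, c i * e i with hPdef
    set Q : ℝ := ∑ i ∈ Finset.univ.erase i0, lam i * e i ^ 2 with hQdef
    have hQ : Q ≤ 0 :=
      Finset.sum_nonpos fun i hi =>
        mul_nonpos_of_nonpos_of_nonneg
          (le_of_lt (hnegne i (Finset.ne_of_mem_erase hi))) (sq_nonneg _)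
    have hCS : P ^ 2 ≤ R * Q := by
      have hcs := Finset.sum_mul_sq_le_sq_mul_sq (Finset.univ.erase i0)
        (fun i => c i / Real.sqrt (-lam i)) (fun i => Real.sqrt (-lam i) * e i)
      have hfg : ∀ i ∈ Finset.univ.erase i0,
          (c i / Real.sqrt (-lam i)) * (Real.sqrt (-lam i) * e i) = c i * e i := by
        intro i hi
        have hli : lam i < 0 := hnegne i (Finset.ne_of_mem_erase hi)
        have hs0 : Real.sqrt (-lam i) ≠ 0 := ne_of_gt (Real.sqrt_pos.2 (by linarith))
        field_simp
      have hf2 : ∀ i ∈ Finset.univ.erase i0,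
          (c i / Real.sqrt (-lam i)) ^ 2 = -(c i ^ 2 / lam i) := by
        intro i hi
        have hli : lam i < 0 := hnegne i (Finset.ne_of_mem_erase hi)
        have hs : Real.sqrt (-lam i) ^ 2 = -lam i := Real.sq_sqrt (by linarith)
        rw [div_pow, hs, div_neg]
      have hg2 : ∀ i ∈ Finset.univ.erase i0,
          (Real.sqrt (-lam i) * e i) ^ 2 = -(lam i * e i ^ 2) := by
        intro i hi
        have hli : lam i < 0 := hnegne i (Finset.ne_of_mem_erase hi)
        have hs : Real.sqrt (-lam i) ^ 2 = -lam i := Real.sq_sqrt (by linarith)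
        rw [mul_pow, hs]
        ring
      rw [Finset.sum_congr rfl hfg, Finset.sum_congr rfl hf2, Finset.sum_congr rfl hg2,
        Finset.sum_neg_distrib, Finset.sum_neg_distrib, neg_mul_neg] at hcs
      exact hcs
    have hc0 : lam i0 * (1 - R) ≤ c i0 ^ 2 := by
      rw [hSsplit] at hS
      have h2 : 1 - R ≤ c i0 ^ 2 / lam i0 := by linarith
      rw [le_div_iff₀ hl1'] at h2
      nlinarith [h2]
    rw [hsplit (fun i => lam i * e i ^ 2), hsplit (fun i => c i * e i)]
    rw [← hPdef, ← hQdef]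
    clear_value P Q R
    have ha : 0 ≤ c i0 ^ 2 - lam i0 := by
      nlinarith [hc0, mul_nonneg hl1'.le (neg_nonneg.2 hR)]
    have hkey : lam i0 * P ^ 2 ≤ (c i0 ^ 2 - lam i0) * (-Q) := by
      have h1 : lam i0 * P ^ 2 ≤ lam i0 * (R * Q) :=
        mul_le_mul_of_nonneg_left hCS hl1'.le
      nlinarith [h1, hQ, hc0]
    rcases eq_or_lt_of_le ha with heq | hlt
    · have hP2 : P ^ 2 ≤ 0 := by nlinarith [hkey, hl1']
      have hP : P = 0 := pow_eq_zero_iff two_ne_zero |>.mp (le_antisymm hP2 (sq_nonneg P))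
      have hcl : c i0 ^ 2 = lam i0 := by linarith
      rw [hP]
      calc lam i0 * e i0 ^ 2 + Q ≤ lam i0 * e i0 ^ 2 := by linarith
      _ = (c i0 * e i0 + 0) ^ 2 := by rw [add_zero, mul_pow, hcl]
    · nlinarith [hkey, hQ, hlt, sq_nonneg ((c i0 ^ 2 - lam i0) * e i0 + c i0 * P)]
end

section
/- Let T be a tree on n labeled vertices with distance matrix D(T) and P(T) = ((n−1)/2)J − D(T), assumed positive semidefinite. Let A be a symmetric nonnegative n×n matrix, α ∈ ℝⁿ, and μ ∈ ℝⁿ with μ ≥ 0 componentwise, such that diag(α) + μ μᵀ − A is positive semidefinite. Then trace(D(T)·A) ≥ ((n−1)/2)·Σ_{i,j} A_{ij} − ((n−1)/2)·Σᵢ αᵢ − μᵀ P(T) μ. -/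
open Matrix

private lemma trace_mul_psd_nonneg {n : ℕ} (P M : Matrix (Fin n) (Fin n) ℝ)
    (hP : P.PosSemidef) (hM : M.PosSemidef) : 0 ≤ (P * M).trace := by
  obtain ⟨m, v, hv⟩ := Matrix.posSemidef_iff_eq_sum_vecMulVec.mp hP
  obtain ⟨B, rfl⟩ : ∃ B : Matrix (Fin m) (Fin n) ℝ, P = Bᴴ * B :=
    ⟨Matrix.of fun i k => v i k, by
      rw [hv]; ext j k
      simp [Matrix.mul_apply, Matrix.vecMulVec_apply, Matrix.sum_apply]⟩
  rw [Matrix.mul_assoc, Matrix.trace_mul_comm]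
  have key : ∀ i, 0 ≤ (B * (M * Bᴴ)) i i := by
    intro i
    have h := hM.dotProduct_mulVec_nonneg (fun k => B i k)
    have e : (star fun k => B i k) ⬝ᵥ M.mulVec (fun k => B i k)
        = (B * (M * Bᴴ)) i i := by
      simp only [Matrix.mul_apply, dotProduct, Matrix.mulVec, Matrix.conjTranspose_apply,
        Pi.star_apply, RCLike.star_def, starRingEnd_apply, star_trivial]
    rw [e] at h
    exact h
  rw [Matrix.mul_assoc, Matrix.trace]
  exact Finset.sum_nonneg fun i _ => key i

/-- core lower-bound inequality. For a tree T with distance matrix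
D, P = ((n−1)/2)J − D assumed PSD, A symmetric nonnegative, μ ≥ 0 and
diag(α) + μμᵀ − A ⪰ 0, we have
trace(D·A) ≥ ((n−1)/2)·Σ_{ij}A_{ij} − ((n−1)/2)·Σᵢαᵢ − μᵀPμ. -/
theorem tree_lower_bound_inequality {n : ℕ}
    (T : SimpleGraph (Fin n)) (hT : T.IsTree)
    (D P : Matrix (Fin n) (Fin n) ℝ)
    (hD : ∀ i j, D i j = (T.dist i j : ℝ))
    (hP : ∀ i j, P i j = ((n : ℝ) - 1) / 2 - D i j)
    (hPsd : P.PosSemidef)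
    (A : Matrix (Fin n) (Fin n) ℝ) (hA : A.IsSymm) (hApos : ∀ i j, 0 ≤ A i j)
    (α μ : Fin n → ℝ) (hμ : ∀ i, 0 ≤ μ i)
    (hBMI : (diagonal α + vecMulVec μ μ - A).PosSemidef) :
    (D * A).trace ≥ ((n : ℝ) - 1) / 2 * ∑ i, ∑ j, A i j
      - ((n : ℝ) - 1) / 2 * ∑ i, α i - μ ⬝ᵥ P.mulVec μ := by
  set c : ℝ := ((n : ℝ) - 1) / 2 with hc
  -- trace(D*A) + trace(P*A) = c * ΣΣ A
  have h1 : (D * A).trace + (P * A).trace = c * ∑ i, ∑ j, A i j := by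
    rw [← Matrix.trace_add, ← Matrix.add_mul]
    have : ∀ i j, (D + P) i j = c := by
      intro i j; simp [Matrix.add_apply, hP i j]
    simp only [Matrix.trace, Matrix.diag, Matrix.mul_apply, this]
    rw [Finset.mul_sum]
    rw [Finset.sum_comm]
    refine Finset.sum_congr rfl fun j _ => ?_
    rw [Finset.mul_sum]
  -- diagonal of P is c
  have hPii : ∀ i, P i i = c := by
    intro i
    rw [hP, hD]
    simp
  -- trace(P * diagonal α) = c * Σ α
  have h2 : (P * diagonal α).trace = c * ∑ i, α i := by
    simp only [Matrix.trace, Matrix.diag, Matrix.mul_apply, Matrix.diagonal_apply]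
    rw [Finset.mul_sum]
    refine Finset.sum_congr rfl fun i _ => ?_
    rw [Finset.sum_eq_single i]
    · rw [if_pos rfl, hPii]
    · intro j _ hji; rw [if_neg hji, mul_zero]
    · intro h; exact absurd (Finset.mem_univ i) h
  -- trace(P * vecMulVec μ μ) = μ ⬝ᵥ P.mulVec μ
  have h3 : (P * vecMulVec μ μ).trace = μ ⬝ᵥ P.mulVec μ := by
    simp only [Matrix.trace, Matrix.diag, Matrix.mul_apply, Matrix.vecMulVec_apply,
      dotProduct, Matrix.mulVec]
    refine Finset.sum_congr rfl fun i _ => ?_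
    rw [Finset.mul_sum]
    refine Finset.sum_congr rfl fun j _ => ?_
    ring
  have h4 : 0 ≤ (P * (diagonal α + vecMulVec μ μ - A)).trace :=
    trace_mul_psd_nonneg _ _ hPsd hBMI
  rw [Matrix.mul_sub, Matrix.mul_add, Matrix.trace_sub, Matrix.trace_add, h2, h3] at h4
  linarith
end
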